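/- Let k > 0 and let T be a linear operator that maps each function holomorphic on some neighborhood of the segment I = [-1,1] ⊂ ℂ to a function holomorphic on some neighborhood of I, and which satisfies the A(k) property. Then for every k-sequence (f_n)_{n≥1} (with parameter B not exceeding the k-threshold τ of T), the sequence (T f_n)_{n≥1} is again a k-sequence; in particular the series Σ_{n≥1} (T f_n)|_{[-1,1]} converges uniformly on [-1,1] and its sum belongs to the Gevrey class G_k([-1,1]). -/

import Mathlib

open Metric Set Filter

noncomputable section

/-- The segment `[-1,1]` viewed inside `ℂ`. -/
def seg : Set ℂ := (fun x : ℝ => (x : ℂ)) '' Set.Icc (-1) 1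

/-- The neighborhood `[-1,1]_r` of the segment. -/
def nbd (r : ℝ) : Set ℂ := {z : ℂ | Metric.infDist z seg < r}

/-- The set `[-1,1]_{k,A,n}`. -/
def tube (k A : ℝ) (n : ℕ) : Set ℂ :=
  {z : ℂ | Metric.infDist z seg < A * (n : ℝ) ^ (-(1 : ℝ) / k)}

/-- Sup norm of `f` on `S`. -/
def supOn (f : ℂ → ℂ) (S : Set ℂ) : ℝ := sSup ((fun z => ‖f z‖) '' S)

/-- The Gevrey class `G_k([-1,1])`. -/
def GevreyClass (k : ℝ) (f : ℝ → ℂ) : Prop :=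
  ContDiffOn ℝ (⊤ : ℕ∞) f (Set.Icc (-1) 1) ∧
  ∃ C > 0, ∃ A > 0, ∀ n : ℕ, ∀ x ∈ Set.Icc (-1 : ℝ) 1,
    ‖iteratedDerivWithin n f (Set.Icc (-1 : ℝ) 1) x‖ ≤
      C * A ^ n * (n : ℝ) ^ ((n : ℝ) * (1 + 1 / k))

/-- `(f_n)_{n ≥ 1}` is a `k`-sequence. -/
def IsKSeq (k : ℝ) (f : ℕ → ℂ → ℂ) : Prop :=
  ∃ B > 0, ∃ C > 0, ∃ θ ∈ Set.Ioo (0 : ℝ) 1, ∀ n : ℕ, 1 ≤ n →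
    DifferentiableOn ℂ (f n) (tube k B n) ∧ ∀ z ∈ tube k B n, ‖f n z‖ ≤ C * θ ^ n

/-- The `E(k)` property with threshold `τ` for a sequence of functions on `[-1,1]_σ`. -/
def EPropWith (k σ : ℝ) (φ : ℕ → ℂ → ℂ) (τ : ℝ) : Prop :=
  0 < τ ∧ τ ≤ σ ∧ ∀ A : ℝ, 0 < A → A ≤ τ → ∃ M : ℕ, ∀ n : ℕ, M ≤ n → ∀ p : ℕ,
    ∀ z ∈ tube k A (n + 1), φ p z ∈ tube k A n

/-- The `E(k)` property. -/
def EProp (k σ : ℝ) (φ : ℕ → ℂ → ℂ) : Prop := ∃ τ : ℝ, EPropWith k σ φ τ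

/-- `T` is a linear operator on functions. -/
def IsLinOp (T : (ℂ → ℂ) → ℂ → ℂ) : Prop :=
  (∀ f g : ℂ → ℂ, T (f + g) = T f + T g) ∧ ∀ (c : ℂ) (f : ℂ → ℂ), T (c • f) = c • T f

/-- The quantitative part of the `A(k)` property, for a given `A` and integer `N = N(A)`. -/
def APropAt (k : ℝ) (T : (ℂ → ℂ) → ℂ → ℂ) (ρ A : ℝ) (N : ℕ) : Prop :=
  ∀ n : ℕ, N ≤ n → ∀ f : ℂ → ℂ, DifferentiableOn ℂ f (tube k A n) →
    BddAbove ((fun z => ‖f z‖) '' tube k A n) →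
    DifferentiableOn ℂ (T f) (tube k A (n + 1)) ∧
      ∀ z ∈ tube k A (n + 1), ‖T f z‖ ≤ ρ * supOn f (tube k A n)

/-- The `A(k)` property with `k`-threshold `τ` and contraction constant `ρ`. -/
def AProp (k : ℝ) (T : (ℂ → ℂ) → ℂ → ℂ) (τ ρ : ℝ) : Prop :=
  0 < τ ∧ ρ ∈ Set.Ioo (0 : ℝ) 1 ∧
  (∀ A : ℝ, 0 < A → A ≤ τ → ∃ N : ℕ, APropAt k T ρ A N) ∧
  (∀ f : ℂ → ℂ, (∃ r > 0, DifferentiableOn ℂ f (nbd r)) →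
      ∀ z ∈ seg, ‖T f z‖ ≤ ρ * supOn f seg)


lemma mem_seg {x : ℝ} (hx : x ∈ Set.Icc (-1:ℝ) 1) : (x:ℂ) ∈ seg := ⟨x, hx, rfl⟩

lemma isOpen_tube (k A : ℝ) (n : ℕ) : IsOpen (tube k A n) :=
  isOpen_lt (continuous_infDist_pt seg) continuous_const

lemma seg_subset_tube {k A : ℝ} {n : ℕ} (h : 0 < A * (n:ℝ)^(-(1:ℝ)/k)) :
    seg ⊆ tube k A n := fun z hz => by
  simpa [tube, infDist_zero_of_mem hz] using h

lemma iteratedDeriv_zero_fun (p : ℕ) : iteratedDeriv p (fun _ : ℂ => (0:ℂ)) = fun _ => 0 := by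
  induction p with
  | zero => simp [iteratedDeriv_zero]
  | succ p ih => rw [iteratedDeriv_succ, ih]; exact deriv_const' 0

lemma iteratedDeriv_analytic {g : ℂ → ℂ} {U : Set ℂ} (hU : IsOpen U)
    (hg : DifferentiableOn ℂ g U) (p : ℕ) :
    AnalyticOnNhd ℂ (iteratedDeriv p g) U := by
  induction p with
  | zero => simpa [iteratedDeriv_zero] using hg.analyticOnNhd hU
  | succ p ih => rw [iteratedDeriv_succ]; exact ih.deriv

lemma cauchy_bound {g : ℂ → ℂ} {c : ℂ} {R M : ℝ} (hR : 0 < R)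
    (hd : DifferentiableOn ℂ g (closedBall c R))
    (hM : ∀ z ∈ closedBall c R, ‖g z‖ ≤ M) (p : ℕ) :
    ‖iteratedDeriv p g c‖ ≤ (p.factorial : ℝ) * M / R ^ p := by
  lift R to NNReal using hR.le with R'
  have hR0 : 0 < R' := by exact_mod_cast hR
  have hps := hd.hasFPowerSeriesOnBall hR0
  have hcoef := hps.factorial_smul 1 p
  have hM0 : 0 ≤ M := le_trans (norm_nonneg _) (hM c (mem_closedBall_self (by positivity)))
  have hnorm : ‖iteratedDeriv p g c‖
      = (p.factorial:ℝ) * ‖cauchyPowerSeries g c R' p fun _ => 1‖ := by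
    rw [iteratedDeriv_eq_iteratedFDeriv, ← hcoef, nsmul_eq_mul, norm_mul]
    norm_num
  have hmem : ∀ θ : ℝ, circleMap c R' θ ∈ closedBall c R' := fun θ =>
    sphere_subset_closedBall (circleMap_mem_sphere c (by positivity) θ)
  have cont : Continuous fun θ : ℝ => ‖g (circleMap c R' θ)‖ :=
    (hd.continuousOn.comp_continuous (continuous_circleMap _ _) hmem).norm
  have h2π : (0:ℝ) < 2*Real.pi := Real.two_pi_pos
  have hint : ∫ θ in (0:ℝ)..2*Real.pi, ‖g (circleMap c R' θ)‖ ≤ 2*Real.pi*M := by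
    have h1 := intervalIntegral.integral_mono_on (μ := MeasureTheory.volume) h2π.le
      (cont.intervalIntegrable 0 (2*Real.pi)) intervalIntegrable_const
      (fun θ _ => hM _ (hmem θ))
    simpa [smul_eq_mul, mul_comm] using h1
  have hcb : ‖cauchyPowerSeries g c R' p‖ ≤ M * ((R':ℝ)⁻¹)^p := by
    refine (norm_cauchyPowerSeries_le g c R' p).trans ?_
    rw [abs_of_nonneg (by positivity : (0:ℝ) ≤ (R':ℝ))]
    apply mul_le_mul_of_nonneg_right _ (by positivity)
    calc (2*Real.pi)⁻¹ * ∫ θ in (0:ℝ)..2*Real.pi, ‖g (circleMap c R' θ)‖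
        ≤ (2*Real.pi)⁻¹ * (2*Real.pi*M) := by
          exact mul_le_mul_of_nonneg_left hint (by positivity)
      _ = M := by field_simp
  rw [hnorm]
  have hle : ‖cauchyPowerSeries g c R' p fun _ => 1‖ ≤ M * ((R':ℝ)⁻¹)^p := by
    refine le_trans ((cauchyPowerSeries g c R' p).le_opNorm _) ?_
    simpa using hcb
  calc (p.factorial:ℝ) * ‖cauchyPowerSeries g c R' p fun _ => 1‖
      ≤ (p.factorial:ℝ) * (M * ((R':ℝ)⁻¹)^p) := by
        exact mul_le_mul_of_nonneg_left hle (by positivity)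
    _ = (p.factorial:ℝ) * M / (R':ℝ) ^ p := by
        rw [div_eq_mul_inv, ← inv_pow]; ring

lemma hasDerivWithinAt_of_unif {s : Set ℝ} (hs : Convex ℝ s)
    {F F' : ℕ → ℝ → ℂ} {g g' : ℝ → ℂ}
    (hF : ∀ n, ∀ x ∈ s, HasDerivWithinAt (F n) (F' n x) s x)
    (hF' : TendstoUniformlyOn F' g' atTop s)
    (hFg : ∀ x ∈ s, Tendsto (fun n => F n x) atTop (nhds (g x)))
    {x : ℝ} (hx : x ∈ s) : HasDerivWithinAt g (g' x) s x := by
  rw [hasDerivWithinAt_iff_tendsto_slope, Metric.tendsto_nhds]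
  intro ε hε
  obtain ⟨N, hN⟩ : ∃ N, ∀ n ≥ N, ∀ y ∈ s, dist (g' y) (F' n y) < ε/8 :=
    eventually_atTop.mp ((tendstoUniformlyOn_iff.mp hF') (ε/8) (by positivity))
  have key : ∀ y ∈ s, ‖(F N y - g y) - (F N x - g x)‖ ≤ ε/4 * ‖y - x‖ := by
    intro y hy
    have hlim : Tendsto (fun m => ‖(F N y - F m y) - (F N x - F m x)‖) atTop
        (nhds ‖(F N y - g y) - (F N x - g x)‖) :=
      ((tendsto_const_nhds.sub (hFg y hy)).sub (tendsto_const_nhds.sub (hFg x hx))).norm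
    refine le_of_tendsto hlim (eventually_atTop.mpr ⟨N, fun m hm => ?_⟩)
    have hcau : ∀ z ∈ s, ‖F' N z - F' m z‖ ≤ ε/4 := by
      intro z hz
      have h1 := hN N le_rfl z hz
      have h2 := hN m hm z hz
      calc ‖F' N z - F' m z‖ ≤ dist (F' N z) (g' z) + dist (g' z) (F' m z) := by
            rw [← dist_eq_norm]; exact dist_triangle _ _ _
        _ ≤ ε/8 + ε/8 := add_le_add (by rw [dist_comm]; exact h1.le) h2.le
        _ = ε/4 := by ring
    exact hs.norm_image_sub_le_of_norm_hasDerivWithin_le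
      (fun z hz => (hF N z hz).sub (hF m z hz)) hcau hx hy
  have hsl2 : ∀ᶠ y in nhdsWithin x (s \ {x}), dist (slope (F N) x y) (F' N x) < ε/4 :=
    (Metric.tendsto_nhds.mp (hasDerivWithinAt_iff_tendsto_slope.mp (hF N x hx))) (ε/4)
      (by positivity)
  filter_upwards [hsl2, self_mem_nhdsWithin] with y h1 h2
  obtain ⟨hy, hyx'⟩ := h2
  have hyx : y ≠ x := by simpa using hyx'
  have hsub : y - x ≠ 0 := sub_ne_zero.mpr hyx
  have e1 : ‖slope g x y - slope (F N) x y‖ ≤ ε/4 := by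
    have hrew : slope g x y - slope (F N) x y
        = (y - x)⁻¹ • ((g y - F N y) - (g x - F N x)) := by
      rw [slope_def_module, slope_def_module, ← smul_sub]
      congr 1; ring
    rw [hrew, norm_smul, norm_inv, Real.norm_eq_abs]
    have habs : (0:ℝ) < |y - x| := abs_pos.mpr hsub
    have h3 : ‖(g y - F N y) - (g x - F N x)‖ ≤ ε/4 * ‖y - x‖ := by
      rw [show (g y - F N y) - (g x - F N x) = -((F N y - g y) - (F N x - g x)) by ring,
        norm_neg]
      exact key y hy
    calc |y - x|⁻¹ * ‖(g y - F N y) - (g x - F N x)‖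
        ≤ |y - x|⁻¹ * (ε/4 * ‖y - x‖) := by
          exact mul_le_mul_of_nonneg_left h3 (by positivity)
      _ = ε/4 := by rw [Real.norm_eq_abs]; field_simp
  have e2 : dist (F' N x) (g' x) < ε/8 := by rw [dist_comm]; exact hN N le_rfl x hx
  calc dist (slope g x y) (g' x)
      ≤ dist (slope g x y) (slope (F N) x y) + dist (slope (F N) x y) (F' N x)
          + dist (F' N x) (g' x) := dist_triangle4 _ _ _ _
    _ < ε/4 + ε/4 + ε/8 := by
        refine add_lt_add_of_lt_of_lt (add_lt_add_of_le_of_lt ?_ h1) e2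
        rw [dist_eq_norm]; exact e1
    _ < ε := by linarith

lemma chain_smooth {G : ℕ → ℝ → ℂ}
    (hG : ∀ p, ∀ x ∈ Set.Icc (-1:ℝ) 1,
      HasDerivWithinAt (G p) (G (p+1) x) (Set.Icc (-1:ℝ) 1) x) :
    ContDiffOn ℝ (⊤ : ℕ∞) (G 0) (Set.Icc (-1:ℝ) 1) ∧
      ∀ p, ∀ x ∈ Set.Icc (-1:ℝ) 1,
        iteratedDerivWithin p (G 0) (Set.Icc (-1:ℝ) 1) x = G p x := by
  have hu : UniqueDiffOn ℝ (Set.Icc (-1:ℝ) 1) := uniqueDiffOn_Icc (by norm_num)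
  have hder : ∀ p, ∀ x ∈ Set.Icc (-1:ℝ) 1,
      derivWithin (G p) (Set.Icc (-1:ℝ) 1) x = G (p+1) x :=
    fun p x hx => (hG p x hx).derivWithin (hu x hx)
  have hm : ∀ (m : ℕ) (p : ℕ), ContDiffOn ℝ m (G p) (Set.Icc (-1:ℝ) 1) := by
    intro m
    induction m with
    | zero =>
      intro p
      rw [show ((0:ℕ) : WithTop ℕ∞) = 0 from rfl, contDiffOn_zero]
      exact fun x hx => (hG p x hx).continuousWithinAt
    | succ m ih =>
      intro p
      have : ((m+1 : ℕ) : WithTop ℕ∞) = (m : WithTop ℕ∞) + 1 := by push_cast; rfl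
      rw [this, contDiffOn_succ_iff_derivWithin hu]
      refine ⟨fun x hx => (hG p x hx).differentiableWithinAt, ?_, ?_⟩
      · intro h; exact absurd h (by simp)
      · exact (ih (p+1)).congr (fun x hx => hder p x hx)
  refine ⟨contDiffOn_infty.mpr (fun n => hm n 0), ?_⟩
  intro p
  induction p with
  | zero => intro x hx; simp
  | succ p ih =>
    intro x hx
    rw [iteratedDerivWithin_succ,
      derivWithin_congr (fun y hy => ih y hy) (ih x hx)]
    exact hder p x hx

lemma rpow_le_exp_aux {y q : ℝ} (hy : 0 ≤ y) (hq : 0 ≤ q) :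
    y ^ q ≤ q ^ q * Real.exp y := by
  rcases eq_or_lt_of_le hq with h0 | hq
  · rw [← h0, Real.rpow_zero, Real.rpow_zero, one_mul]
    exact Real.one_le_exp hy
  · rcases eq_or_lt_of_le hy with h0 | hy
    · rw [← h0, Real.zero_rpow hq.ne']; positivity
    · have h1 : y / q ≤ Real.exp (y/q) := by
        have := Real.add_one_le_exp (y/q); linarith
      have h2 : y ≤ q * Real.exp (y/q) := by
        have h3 := mul_le_mul_of_nonneg_left h1 hq.le
        calc y = q * (y/q) := by field_simp
          _ ≤ q * Real.exp (y/q) := h3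
      calc y ^ q ≤ (q * Real.exp (y/q))^q := Real.rpow_le_rpow hy.le h2 hq.le
        _ = q^q * (Real.exp (y/q))^q := Real.mul_rpow hq.le (Real.exp_pos _).le
        _ = q^q * Real.exp y := by
            rw [Real.rpow_def_of_pos (Real.exp_pos _), Real.log_exp]
            congr 1; field_simp

lemma geom_rpow_bound {s q : ℝ} (hs0 : 0 < s) (hs1 : s < 1) (hq : 0 ≤ q) (n : ℕ) :
    (n:ℝ) ^ q * s ^ n ≤ (q / (-Real.log s)) ^ q := by
  set c := -Real.log s with hcdef
  have hc : 0 < c := neg_pos.mpr (Real.log_neg hs0 hs1)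
  have hsn : s ^ n = Real.exp (-(c * n)) := by
    rw [← Real.exp_log hs0, ← Real.exp_nat_mul]
    congr 1
    rw [hcdef]; ring
  have h1 : (c*n)^q ≤ q^q * Real.exp (c*n) := rpow_le_exp_aux (by positivity) hq
  have h2 : (n:ℝ)^q = (c*n)^q / c^q := by
    rw [Real.mul_rpow hc.le (Nat.cast_nonneg n)]
    field_simp
  rw [h2, hsn, Real.div_rpow hq hc.le]
  rw [div_mul_eq_mul_div, div_le_div_iff_of_pos_right (by positivity)]
  calc (c*n)^q * Real.exp (-(c*n)) ≤ (q^q * Real.exp (c*n)) * Real.exp (-(c*n)) := by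
        exact mul_le_mul_of_nonneg_right h1 (Real.exp_pos _).le
    _ = q^q := by rw [mul_assoc, ← Real.exp_add]; simp

/-- if `T` is a linear operator with the `A(k)` property and
`(f_n)_{n≥1}` is a `k`-sequence whose parameter `B` does not exceed the
`k`-threshold `τ` of `T`, then `(T f_n)_{n≥1}` is again a `k`-sequence; in
particular the series `Σ (T f_n)|_{[-1,1]}` converges uniformly on `[-1,1]`
and its sum belongs to `G_k([-1,1])`. -/
theorem kSeq_image_under_APropOp (k τ ρ B C θ : ℝ) (hk : 0 < k)
    (T : (ℂ → ℂ) → ℂ → ℂ) (hTlin : IsLinOp T) (hTA : AProp k T τ ρ)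
    (f : ℕ → ℂ → ℂ) (hB : 0 < B) (hBτ : B ≤ τ) (hC : 0 < C)
    (hθ : θ ∈ Set.Ioo (0 : ℝ) 1)
    (hf : ∀ n : ℕ, 1 ≤ n → DifferentiableOn ℂ (f n) (tube k B n) ∧
      ∀ z ∈ tube k B n, ‖f n z‖ ≤ C * θ ^ n) :
    IsKSeq k (fun n => T (f n)) ∧
    ∃ F : ℝ → ℂ,
      TendstoUniformlyOn (fun N (x : ℝ) => ∑ n ∈ Finset.Icc 1 N, T (f n) (x : ℂ))
        F Filter.atTop (Set.Icc (-1) 1) ∧ GevreyClass k F := by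

  obtain ⟨hθ0, hθ1⟩ := hθ
  obtain ⟨hρ0, hρ1⟩ := hTA.2.1
  obtain ⟨N₀, hN₀⟩ := hTA.2.2.1 B hB hBτ
  have hek : (-(1:ℝ)/k) ≤ 0 := by
    rw [neg_div]; exact neg_nonpos.mpr (by positivity)
  have hrad : ∀ {A : ℝ}, 0 < A → ∀ {n : ℕ}, 1 ≤ n → 0 < A * (n:ℝ)^(-(1:ℝ)/k) := by
    intro A hA n hn
    have hn0 : (0:ℝ) < (n:ℝ) := by exact_mod_cast hn
    positivity
  have hmono : ∀ {A : ℝ}, 0 ≤ A → ∀ {n m : ℕ}, 1 ≤ n → n ≤ m →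
      A * (m:ℝ)^(-(1:ℝ)/k) ≤ A * (n:ℝ)^(-(1:ℝ)/k) := by
    intro A hA n m hn hnm
    apply mul_le_mul_of_nonneg_left _ hA
    exact Real.rpow_le_rpow_of_nonpos (by exact_mod_cast hn) (by exact_mod_cast hnm) hek
  set N := max N₀ 1 with hNdef
  have hN1 : 1 ≤ N := le_max_right _ _
  set B' := B * (((N:ℕ):ℝ)+1) ^ (-(1:ℝ)/k) with hB'def
  have hB' : 0 < B' := mul_pos hB (Real.rpow_pos_of_pos (by positivity) _)
  -- Part 1: the key estimate
  have key : ∀ n : ℕ, 1 ≤ n → DifferentiableOn ℂ (T (f n)) (tube k B' n) ∧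
      ∀ z ∈ tube k B' n, ‖T (f n) z‖ ≤ ρ * C * θ ^ n := by
    intro n hn
    set m := max n N₀ with hmdef
    have hnm : n ≤ m := le_max_left _ _
    have hsub1 : tube k B m ⊆ tube k B n :=
      fun z hz => lt_of_lt_of_le hz (hmono hB.le hn hnm)
    have hfb : ∀ y ∈ (fun z => ‖f n z‖) '' tube k B m, y ≤ C * θ^n := by
      rintro y ⟨z, hz, rfl⟩; exact (hf n hn).2 z (hsub1 hz)
    obtain ⟨hdiff, hbnd⟩ := hN₀ m (le_max_right _ _) (f n) ((hf n hn).1.mono hsub1)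
      ⟨C*θ^n, fun y hy => hfb y hy⟩
    have hsup : supOn (f n) (tube k B m) ≤ C * θ^n := Real.sSup_le hfb (by positivity)
    have hm2 : m + 1 ≤ n * (N + 1) := by
      have hmN : m ≤ n * N := by
        apply max_le
        · calc n = n * 1 := (mul_one n).symm
            _ ≤ n * N := Nat.mul_le_mul_left n hN1
        · calc N₀ ≤ N := le_max_left _ _
            _ = 1 * N := (one_mul N).symm
            _ ≤ n * N := Nat.mul_le_mul_right N hn
      calc m + 1 ≤ n * N + 1 := by omega
        _ ≤ n * N + n := by omega
        _ = n * (N+1) := by ring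
    have hsub2 : tube k B' n ⊆ tube k B (m+1) := by
      intro z hz
      have hz' : infDist z seg < B' * (n:ℝ)^(-(1:ℝ)/k) := hz
      show infDist z seg < B * (((m+1:ℕ)):ℝ)^(-(1:ℝ)/k)
      refine lt_of_lt_of_le hz' ?_
      have hm2' : (((m+1:ℕ)):ℝ) ≤ ((((N:ℕ):ℝ)+1) * (n:ℝ)) := by
        push_cast
        have : (m:ℝ) + 1 ≤ (n:ℝ) * ((N:ℝ)+1) := by exact_mod_cast hm2
        linarith
      have h5 : (((((N:ℕ):ℝ)+1)) * (n:ℝ))^(-(1:ℝ)/k) ≤ (((m+1:ℕ)):ℝ)^(-(1:ℝ)/k) :=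
        Real.rpow_le_rpow_of_nonpos (by positivity) hm2' hek
      calc B' * (n:ℝ)^(-(1:ℝ)/k)
          = B * (((((N:ℕ):ℝ)+1))^(-(1:ℝ)/k) * (n:ℝ)^(-(1:ℝ)/k)) := by
            rw [hB'def]; ring
        _ = B * ((((((N:ℕ):ℝ)+1)) * (n:ℝ))^(-(1:ℝ)/k)) := by
            rw [Real.mul_rpow (by positivity) (by positivity)]
        _ ≤ B * ((((m+1:ℕ)):ℝ)^(-(1:ℝ)/k)) := mul_le_mul_of_nonneg_left h5 hB.le
    refine ⟨hdiff.mono hsub2, fun z hz => ?_⟩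
    calc ‖T (f n) z‖ ≤ ρ * supOn (f n) (tube k B m) := hbnd z (hsub2 hz)
      _ ≤ ρ * (C * θ^n) := mul_le_mul_of_nonneg_left hsup hρ0.le
      _ = ρ * C * θ^n := by ring
  refine ⟨⟨B', hB', ρ*C, by positivity, θ, ⟨hθ0, hθ1⟩, key⟩, ?_⟩
  -- Part 2
  set C' := ρ * C with hC'def
  have hC' : 0 < C' := mul_pos hρ0 hC
  set g : ℕ → ℂ → ℂ := fun n z => if n = 0 then 0 else T (f n) z with hgdef
  have hg0 : g 0 = fun _ => (0:ℂ) := by funext z; simp [hgdef]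
  have hgn : ∀ n : ℕ, 1 ≤ n → g n = T (f n) := by
    intro n hn; funext z; simp [hgdef, Nat.one_le_iff_ne_zero.mp hn]
  have hg : ∀ n : ℕ, DifferentiableOn ℂ (g n) (tube k B' n) ∧
      ∀ z ∈ tube k B' n, ‖g n z‖ ≤ C' * θ^n := by
    intro n
    rcases Nat.eq_zero_or_pos n with h0 | h1
    · subst h0
      rw [hg0]
      exact ⟨differentiableOn_const 0, fun z _ => by simp; positivity⟩
    · rw [hgn n h1]
      exact key n h1
  have hmemtube : ∀ (n : ℕ), 1 ≤ n → ∀ x ∈ Set.Icc (-1:ℝ) 1, (x:ℂ) ∈ tube k B' n :=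
    fun n hn x hx => seg_subset_tube (hrad hB' hn) (mem_seg hx)
  set u : ℕ → ℕ → ℝ :=
    fun p n => (p.factorial : ℝ) * C' * θ^n * ((2/B') * (n:ℝ)^((1:ℝ)/k))^p with hudef
  have hu0 : ∀ p n, 0 ≤ u p n := by
    intro p n
    rw [hudef]
    have := Real.rpow_nonneg (Nat.cast_nonneg (α := ℝ) n) ((1:ℝ)/k)
    positivity
  have hbound : ∀ p n, ∀ x ∈ Set.Icc (-1:ℝ) 1, ‖iteratedDeriv p (g n) ↑x‖ ≤ u p n := by
    intro p n x hx
    rcases Nat.eq_zero_or_pos n with h0 | h1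
    · subst h0
      rw [hg0, iteratedDeriv_zero_fun]
      simpa using hu0 p 0
    · have hn0 : (0:ℝ) < (n:ℝ) := by exact_mod_cast h1
      set r := B' * (n:ℝ)^(-(1:ℝ)/k) with hrdef
      have hr : 0 < r := hrad hB' h1
      have hball : closedBall (x:ℂ) (r/2) ⊆ tube k B' n := by
        intro w hw
        have h2 : infDist w seg ≤ dist w (x:ℂ) := infDist_le_dist_of_mem (mem_seg hx)
        have h3 : dist w (x:ℂ) ≤ r/2 := mem_closedBall.mp hw
        exact lt_of_le_of_lt (h2.trans h3) (by linarith)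
      have hcb := cauchy_bound (by positivity : (0:ℝ) < r/2) ((hg n).1.mono hball)
        (fun z hz => (hg n).2 z (hball hz)) p
      refine hcb.trans (le_of_eq ?_)
      have hx1 : ((2/B') * (n:ℝ)^((1:ℝ)/k)) * (r/2) = 1 := by
        have h4 : (n:ℝ)^((1:ℝ)/k) * (n:ℝ)^(-(1:ℝ)/k) = 1 := by
          rw [← Real.rpow_add hn0, show (1:ℝ)/k + -(1:ℝ)/k = 0 by ring, Real.rpow_zero]
        rw [hrdef]
        calc (2/B') * (n:ℝ)^((1:ℝ)/k) * (B' * (n:ℝ)^(-(1:ℝ)/k) / 2)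
            = ((n:ℝ)^((1:ℝ)/k) * (n:ℝ)^(-(1:ℝ)/k)) * (2/B' * (B'/2)) := by ring
          _ = 1 := by rw [h4, one_mul]; field_simp
      have hinv : ((2/B') * (n:ℝ)^((1:ℝ)/k))^p = ((r/2)^p)⁻¹ := by
        rw [eq_inv_of_mul_eq_one_left hx1, inv_pow]
      rw [hudef]
      simp only []
      rw [hinv, div_eq_mul_inv]
      ring
  have hueq : ∀ n, u 0 n = C' * θ^n := by
    intro n
    rw [hudef]
    simp [Nat.factorial_zero]
  have hSum : ∀ p, Summable (u p) := by
    intro p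
    rcases Nat.eq_zero_or_pos p with hp1 | hp1
    · subst hp1
      exact (((summable_geometric_of_lt_one hθ0.le hθ1).mul_left C')).congr
        (fun n => (hueq n).symm)
    set mq := Nat.ceil ((1:ℝ)/k * p) with hmqdef
    have hgeo : Summable (fun n : ℕ =>
        ((p.factorial:ℝ) * C' * (2/B')^p) * ((n:ℝ)^mq * θ^n)) :=
      (summable_pow_mul_geometric_of_norm_lt_one (R := ℝ) mq
        (by rw [Real.norm_eq_abs, abs_of_pos hθ0]; exact hθ1)).mul_left _
    refine Summable.of_nonneg_of_le (fun n => hu0 p n) (fun n => ?_) hgeo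
    rcases Nat.eq_zero_or_pos n with h0 | h1
    · subst h0
      have hz : ((0:ℕ):ℝ)^((1:ℝ)/k) = 0 := by
        rw [Nat.cast_zero]; exact Real.zero_rpow (by positivity)
      rw [hudef]
      simp only [hz, mul_zero, zero_pow (Nat.pos_iff_ne_zero.mp hp1)]
      have h6 : (0:ℝ) ≤ ((p.factorial:ℝ) * C' * (2/B')^p) * (((0:ℕ):ℝ)^mq * θ^0) := by
        positivity
      simpa using h6
    · have hn1 : (1:ℝ) ≤ (n:ℝ) := by exact_mod_cast h1
      have hle : ((n:ℝ)^((1:ℝ)/k))^p ≤ (n:ℝ)^mq := by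
        rw [← Real.rpow_natCast ((n:ℝ)^((1:ℝ)/k)) p, ← Real.rpow_mul (by positivity),
          ← Real.rpow_natCast (n:ℝ) mq]
        exact Real.rpow_le_rpow_of_exponent_le hn1 (Nat.le_ceil _)
      rw [hudef]
      calc (p.factorial:ℝ) * C' * θ^n * ((2/B') * (n:ℝ)^((1:ℝ)/k))^p
          = ((p.factorial:ℝ) * C' * (2/B')^p) * (((n:ℝ)^((1:ℝ)/k))^p * θ^n) := by
            rw [mul_pow]; ring
        _ ≤ ((p.factorial:ℝ) * C' * (2/B')^p) * ((n:ℝ)^mq * θ^n) := by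
            apply mul_le_mul_of_nonneg_left _ (by positivity)
            exact mul_le_mul_of_nonneg_right hle (by positivity)
  -- the sqrt trick and tsum bound
  set s := Real.sqrt θ with hsdef
  have hs0 : 0 < s := Real.sqrt_pos.mpr hθ0
  have hsq : s * s = θ := Real.mul_self_sqrt hθ0.le
  have hs1 : s < 1 := by nlinarith
  set c := -Real.log s with hcdef
  have hc : 0 < c := neg_pos.mpr (Real.log_neg hs0 hs1)
  set a := max 1 ((k*c)^(-(1:ℝ)/k)) with hadef
  have ha1 : (1:ℝ) ≤ a := le_max_left _ _
  have ha0 : (0:ℝ) < a := lt_of_lt_of_le one_pos ha1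
  set AG := (2/B') * a with hAGdef
  have hAG : 0 < AG := mul_pos (by positivity) ha0
  set CG := C' * (1-s)⁻¹ with hCGdef
  have hCG : 0 < CG := mul_pos hC' (inv_pos.mpr (by linarith))
  have htsum : ∀ p : ℕ, (∑' n, u p n) ≤ CG * AG^p * (p:ℝ)^((p:ℝ)*(1+1/k)) := by
    intro p
    rcases Nat.eq_zero_or_pos p with hp1 | hp1
    · subst hp1
      have h9 : (∑' n, u 0 n) = C' * (1-θ)⁻¹ := by
        rw [tsum_congr hueq, tsum_mul_left, tsum_geometric_of_lt_one hθ0.le hθ1]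
      rw [h9, pow_zero, mul_one, Nat.cast_zero, show (0:ℝ)*(1+1/k) = 0 by ring,
        Real.rpow_zero, mul_one, hCGdef]
      apply mul_le_mul_of_nonneg_left _ hC'.le
      have hθs : θ ≤ s := by nlinarith
      apply inv_anti₀ (by linarith) (by linarith)
    set q := (p:ℝ)/k with hqdef
    have hq0 : 0 ≤ q := by positivity
    have hterm : ∀ n : ℕ, u p n ≤ ((p.factorial:ℝ) * C' * (2/B')^p * (q/c)^q) * s^n := by
      intro n
      rcases Nat.eq_zero_or_pos n with h0 | h1
      · subst h0
        have hz : ((0:ℕ):ℝ)^((1:ℝ)/k) = 0 := by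
          rw [Nat.cast_zero]; exact Real.zero_rpow (by positivity)
        rw [hudef]
        simp only [hz, mul_zero, zero_pow (Nat.pos_iff_ne_zero.mp hp1)]
        have h6 : (0:ℝ) ≤ ((p.factorial:ℝ) * C' * (2/B')^p * (q/c)^q) * s^0 := by
          have := Real.rpow_nonneg (by positivity : (0:ℝ) ≤ q/c) q
          positivity
        simpa using h6
      · have hn0 : (0:ℝ) < (n:ℝ) := by exact_mod_cast h1
        have hnq : ((n:ℝ)^((1:ℝ)/k))^p = (n:ℝ)^q := by
          rw [← Real.rpow_natCast ((n:ℝ)^((1:ℝ)/k)) p, ← Real.rpow_mul hn0.le, hqdef]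
          congr 1; ring
        have hkey := geom_rpow_bound hs0 hs1 hq0 n
        rw [← hcdef] at hkey
        rw [hudef]
        calc (p.factorial:ℝ) * C' * θ^n * ((2/B') * (n:ℝ)^((1:ℝ)/k))^p
            = ((p.factorial:ℝ) * C' * (2/B')^p) * (((n:ℝ)^q * s^n) * s^n) := by
              rw [mul_pow, hnq, ← hsq, mul_pow]; ring
          _ ≤ ((p.factorial:ℝ) * C' * (2/B')^p) * ((q/c)^q * s^n) := by
              apply mul_le_mul_of_nonneg_left _ (by positivity)
              exact mul_le_mul_of_nonneg_right hkey (by positivity)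
          _ = ((p.factorial:ℝ) * C' * (2/B')^p * (q/c)^q) * s^n := by ring
    have hsumgeo : Summable (fun n : ℕ =>
        ((p.factorial:ℝ) * C' * (2/B')^p * (q/c)^q) * s^n) :=
      (summable_geometric_of_lt_one hs0.le hs1).mul_left _
    have h1 : (∑' n, u p n) ≤ ((p.factorial:ℝ) * C' * (2/B')^p * (q/c)^q) * (1-s)⁻¹ := by
      refine (Summable.tsum_le_tsum hterm (hSum p) hsumgeo).trans_eq ?_
      rw [tsum_mul_left, tsum_geometric_of_lt_one hs0.le hs1]
    refine h1.trans ?_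
    · have hp0' : (0:ℝ) < (p:ℝ) := by exact_mod_cast hp1
      have e1 : (q/c)^q = (p:ℝ)^q * ((k*c)^q)⁻¹ := by
        rw [hqdef, div_div, Real.div_rpow (by positivity) (by positivity), div_eq_mul_inv]
      have e2 : ((k*c)^q)⁻¹ ≤ a^p := by
        have h7 : ((k*c)^q)⁻¹ = ((k*c)^(-(1:ℝ)/k))^p := by
          rw [← Real.rpow_natCast ((k*c)^(-(1:ℝ)/k)) p, ← Real.rpow_mul (by positivity),
            ← Real.rpow_neg (by positivity)]
          congr 1
          rw [hqdef]; ring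
        rw [h7]
        exact pow_le_pow_left₀ (Real.rpow_nonneg (by positivity) _) (le_max_right _ _) p
      have e3 : (p.factorial : ℝ) ≤ (p:ℝ)^(p:ℕ) := by exact_mod_cast Nat.factorial_le_pow p
      have e4 : (p:ℝ)^(p:ℕ) * (p:ℝ)^q = (p:ℝ)^((p:ℝ)*(1+1/k)) := by
        rw [← Real.rpow_natCast (p:ℝ) p, ← Real.rpow_add hp0', hqdef]
        congr 1
        field_simp
      calc (p.factorial:ℝ) * C' * (2/B')^p * (q/c)^q * (1-s)⁻¹
          = (C' * (1-s)⁻¹) * ((p.factorial:ℝ) * ((q/c)^q) * (2/B')^p) := by ring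
        _ ≤ (C'*(1-s)⁻¹) * (((p:ℝ)^(p:ℕ)) * ((p:ℝ)^q * a^p) * (2/B')^p) := by
            apply mul_le_mul_of_nonneg_left _ (by positivity)
            rw [e1]
            apply mul_le_mul_of_nonneg_right _ (by positivity)
            have h8 : (0:ℝ) ≤ (p:ℝ)^q := Real.rpow_nonneg (by positivity) _
            apply mul_le_mul e3 (mul_le_mul_of_nonneg_left e2 h8) (by positivity)
              (by positivity)
        _ = CG * AG^p * ((p:ℝ)^(p:ℕ) * (p:ℝ)^q) := by
            rw [hCGdef, hAGdef, mul_pow]; ring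
        _ = CG * AG^p * (p:ℝ)^((p:ℝ)*(1+1/k)) := by rw [e4]
  -- series of derivatives
  have hsummableAt : ∀ p, ∀ x ∈ Set.Icc (-1:ℝ) 1,
      Summable (fun n => iteratedDeriv p (g n) ↑x) :=
    fun p x hx => Summable.of_norm_bounded (hSum p) (fun n => hbound p n x hx)
  have hUnif : ∀ p, TendstoUniformlyOn
      (fun M (x:ℝ) => ∑ n ∈ Finset.range M, iteratedDeriv p (g n) ↑x)
      (fun x : ℝ => ∑' n, iteratedDeriv p (g n) ↑x) atTop (Set.Icc (-1:ℝ) 1) :=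
    fun p => tendstoUniformlyOn_tsum_nat (hSum p) (fun n x hx => hbound p n x hx)
  have hHasDeriv : ∀ p n (x : ℝ), x ∈ Set.Icc (-1:ℝ) 1 →
      HasDerivAt (fun y : ℝ => iteratedDeriv p (g n) ↑y)
        (iteratedDeriv (p+1) (g n) ↑x) x := by
    intro p n x hx
    rcases Nat.eq_zero_or_pos n with h0 | h1
    · subst h0
      rw [hg0, iteratedDeriv_zero_fun, iteratedDeriv_zero_fun]
      simpa using hasDerivAt_const x (0:ℂ)
    · have hA := iteratedDeriv_analytic (isOpen_tube k B' n) (hg n).1 p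
      have hxmem : (x:ℂ) ∈ tube k B' n := hmemtube n h1 x hx
      have hd : HasDerivAt (iteratedDeriv p (g n)) (iteratedDeriv (p+1) (g n) ↑x) ↑x := by
        rw [iteratedDeriv_succ]
        exact ((hA ↑x hxmem).differentiableAt).hasDerivAt
      exact hd.comp_ofReal
  have hG' : ∀ p, ∀ x ∈ Set.Icc (-1:ℝ) 1,
      HasDerivWithinAt (fun x : ℝ => ∑' n, iteratedDeriv p (g n) ↑x)
        ((fun x : ℝ => ∑' n, iteratedDeriv (p+1) (g n) ↑x) x) (Set.Icc (-1:ℝ) 1) x := by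
    intro p x hx
    refine hasDerivWithinAt_of_unif (convex_Icc _ _)
      (F := fun M (x:ℝ) => ∑ n ∈ Finset.range M, iteratedDeriv p (g n) ↑x)
      (F' := fun M (x:ℝ) => ∑ n ∈ Finset.range M, iteratedDeriv (p+1) (g n) ↑x)
      ?_ (hUnif (p+1)) ?_ hx
    · intro M y hy
      exact (HasDerivAt.fun_sum (fun n _ => hHasDeriv p n y hy)).hasDerivWithinAt
    · intro y hy
      exact (hsummableAt p y hy).hasSum.tendsto_sum_nat
  obtain ⟨hsmooth, hiter⟩ :=
    chain_smooth (G := fun p (x:ℝ) => ∑' n, iteratedDeriv p (g n) ↑x) hG'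
  refine ⟨fun x : ℝ => ∑' n, iteratedDeriv 0 (g n) ↑x, ?_, hsmooth, CG, hCG, AG, hAG, ?_⟩
  · -- uniform convergence of the stated partial sums
    have hEq : ∀ (Nn : ℕ) (x : ℝ), (∑ n ∈ Finset.Icc 1 Nn, T (f n) (x:ℂ))
        = ∑ n ∈ Finset.range (Nn+1), iteratedDeriv 0 (g n) ↑x := by
      intro Nn x
      simp only [iteratedDeriv_zero]
      have h1 : (∑ n ∈ Finset.Icc 1 Nn, T (f n) (x:ℂ)) = ∑ n ∈ Finset.Icc 1 Nn, g n ↑x :=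
        Finset.sum_congr rfl (fun n hn => by
          have hn0 : n ≠ 0 := by
            have := (Finset.mem_Icc.mp hn).1; omega
          simp [hgdef, hn0])
      rw [h1]
      refine Finset.sum_subset (fun n hn => ?_) (fun n hn hns => ?_)
      · rw [Finset.mem_range]
        have := (Finset.mem_Icc.mp hn).2; omega
      · have hn0 : n = 0 := by
          rw [Finset.mem_range] at hn
          simp only [Finset.mem_Icc, not_and, not_le] at hns
          omega
        subst hn0
        simp [hgdef]
    intro uu huu
    filter_upwards [(tendsto_add_atTop_nat 1).eventually (hUnif 0 uu huu)] with Nn hNn x hx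
    rw [hEq Nn x]
    exact hNn x hx
  · -- the Gevrey estimate
    intro p x hx
    rw [hiter p x hx]
    have hsn : Summable fun n => ‖iteratedDeriv p (g n) ↑x‖ :=
      Summable.of_nonneg_of_le (fun n => norm_nonneg _) (fun n => hbound p n x hx) (hSum p)
    have h2 : ‖∑' n, iteratedDeriv p (g n) ↑x‖ ≤ ∑' n, u p n :=
      (norm_tsum_le_tsum_norm hsn).trans
        (Summable.tsum_le_tsum (fun n => hbound p n x hx) hsn (hSum p))
    exact h2.trans (htsum p)
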